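/- Let ω : [0,1] → ℝ and g : [0,1]² → ℝ be continuous functions, and let n and k be integers with 2 ≤ k ≤ n. Then (1/(n−k)!) · (∫₀¹ e^{ω(s)} ds)^{n−k} · ∫_{0<s₁<⋯<s_k<1} e^{ω(s₁)+⋯+ω(s_k)} g(s₁, s_k) ds₁⋯ds_k equals ∫_{0<s₁<⋯<s_n<1} e^{ω(s₁)+⋯+ω(s_n)} · [ Σ_{1≤i<j≤n, j−i≥k−1} C(j−i−1, k−2) · g(s_i, s_j) ] ds₁⋯ds_n, where C(·,·) denotes the binomial coefficient. -/

import Mathlib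

open MeasureTheory Real

/-- The open ordered simplex `{0 < s 0 < s 1 < ⋯ < s (k-1) < 1}` in `Fin k → ℝ`. -/
def orderedSimplex (k : ℕ) : Set (Fin k → ℝ) :=
  {s | StrictMono s ∧ ∀ i, s i ∈ Set.Ioo (0 : ℝ) 1}

namespace IntermAux

open Finset

/-- The open unit box. -/
def box (n : ℕ) : Set (Fin n → ℝ) := Set.pi Set.univ fun _ => Set.Ioo (0 : ℝ) 1

lemma measurableSet_orderedSimplex (n : ℕ) : MeasurableSet (orderedSimplex n) := by
  have : orderedSimplex n =
      (⋂ i, ⋂ j, {s : Fin n → ℝ | i < j → s i < s j}) ∩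
        ⋂ i, (fun s : Fin n → ℝ => s i) ⁻¹' Set.Ioo 0 1 := by
    ext s
    simp only [orderedSimplex, Set.mem_setOf_eq, Set.mem_inter_iff, Set.mem_iInter,
      Set.mem_preimage, StrictMono]
  rw [this]
  refine MeasurableSet.inter (MeasurableSet.iInter fun i => MeasurableSet.iInter fun j => ?_)
    (MeasurableSet.iInter fun i => measurableSet_Ioo.preimage (measurable_pi_apply i))
  by_cases h : i < j
  · simp only [h, true_implies]
    exact measurableSet_lt (measurable_pi_apply i) (measurable_pi_apply j)
  · simp only [h, false_implies, Set.setOf_true]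
    exact MeasurableSet.univ

lemma orderedSimplex_subset_box (n : ℕ) : orderedSimplex n ⊆ box n :=
  fun _ hx i _ => hx.2 i

lemma box_subset_Icc (n : ℕ) : box n ⊆ Set.pi Set.univ fun _ : Fin n => Set.Icc (0 : ℝ) 1 :=
  fun _ hx i hi => Set.Ioo_subset_Icc_self (hx i hi)

lemma volume_eval_eq (n : ℕ) (i j : Fin n) (hij : i ≠ j) :
    volume {x : Fin n → ℝ | x i = x j} = 0 := by
  classical
  have hji : ¬ (j = i) := fun h => hij h.symm
  let p : Fin n → Prop := fun a => a = i
  let e := MeasurableEquiv.piEquivPiSubtypeProd (fun _ : Fin n => ℝ) p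
  have hmp := MeasureTheory.volume_preserving_piEquivPiSubtypeProd (fun _ : Fin n => ℝ) p
  have hmeas : MeasurableSet {y : ({a // p a} → ℝ) × ({a // ¬ p a} → ℝ) |
      y.2 ⟨j, hji⟩ = y.1 ⟨i, rfl⟩} := by
    exact measurableSet_eq_fun (by fun_prop) (by fun_prop)
  have hset : {x : Fin n → ℝ | x i = x j}
      = e ⁻¹' {y : ({a // p a} → ℝ) × ({a // ¬ p a} → ℝ) | y.2 ⟨j, hji⟩ = y.1 ⟨i, rfl⟩} := by
    ext x
    simp only [Set.mem_setOf_eq, Set.mem_preimage, e,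
      MeasurableEquiv.piEquivPiSubtypeProd, MeasurableEquiv.coe_mk,
      Equiv.piEquivPiSubtypeProd_apply]
    exact eq_comm
  rw [hset, hmp.measure_preimage hmeas.nullMeasurableSet]
  rw [Measure.volume_eq_prod, Measure.prod_apply hmeas]
  have : ∀ a : {a // p a} → ℝ,
      (volume : Measure ({a // ¬ p a} → ℝ)) (Prod.mk a ⁻¹' {y : ({a // p a} → ℝ) × ({a // ¬ p a} → ℝ) | y.2 ⟨j, hji⟩ = y.1 ⟨i, rfl⟩}) = 0 := by
    intro a
    have : (Prod.mk a ⁻¹' {y : ({a // p a} → ℝ) × ({a // ¬ p a} → ℝ) | y.2 ⟨j, hji⟩ = y.1 ⟨i, rfl⟩})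
        = {b : {a // ¬ p a} → ℝ | b ⟨j, hji⟩ = a ⟨i, rfl⟩} := rfl
    rw [this, volume_pi]
    exact MeasureTheory.Measure.pi_hyperplane _ _ _
  simp only [this, MeasureTheory.lintegral_zero]

lemma ae_injective (n : ℕ) : ∀ᵐ x : Fin n → ℝ, Function.Injective x := by
  rw [MeasureTheory.ae_iff]
  refine measure_mono_null (fun x hx => ?_)
    (measure_iUnion_null fun p : Fin n × Fin n => measure_iUnion_null fun hp : p.1 ≠ p.2 =>
      volume_eval_eq n p.1 p.2 hp)
  simp only [Set.mem_setOf_eq, Function.Injective, not_forall] at hx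
  obtain ⟨a, b, hab, hne⟩ := hx
  exact Set.mem_iUnion.2 ⟨(a, b), Set.mem_iUnion.2 ⟨hne, hab⟩⟩

/-- Coordinate permutation as a measurable equiv. -/
def permMap (n : ℕ) (σ : Equiv.Perm (Fin n)) : (Fin n → ℝ) ≃ᵐ (Fin n → ℝ) :=
  MeasurableEquiv.piCongrLeft (fun _ : Fin n => ℝ) σ⁻¹

lemma permMap_apply (n : ℕ) (σ : Equiv.Perm (Fin n)) (x : Fin n → ℝ) :
    permMap n σ x = x ∘ ⇑σ := by
  funext b
  show (MeasurableEquiv.piCongrLeft (fun _ : Fin n => ℝ) σ⁻¹) x b = _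
  simp only [MeasurableEquiv.coe_piCongrLeft]
  have hb : b = (σ⁻¹ : Equiv.Perm (Fin n)) (σ b) := by simp
  conv_lhs => rw [hb]
  exact Equiv.piCongrLeft_apply_apply _ _ _ _

lemma measurePreserving_permMap (n : ℕ) (σ : Equiv.Perm (Fin n)) :
    MeasurePreserving (permMap n σ) volume volume :=
  MeasureTheory.volume_measurePreserving_piCongrLeft (fun _ : Fin n => ℝ) _

/-- Decomposition of an integral over the unit box into integrals over permuted simplices. -/
lemma integral_eq_sum_perm (n : ℕ) (f : (Fin n → ℝ) → ℝ) (hf : Integrable f)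
    (hsupp : ∀ x : Fin n → ℝ, x ∉ box n → f x = 0) :
    ∫ x, f x = ∑ σ : Equiv.Perm (Fin n), ∫ x in orderedSimplex n, f (x ∘ σ) := by
  classical
  set S : Equiv.Perm (Fin n) → Set (Fin n → ℝ) := fun σ => {x | x ∘ σ ∈ orderedSimplex n} with hS
  have hpre : ∀ σ : Equiv.Perm (Fin n), S σ = (permMap n σ) ⁻¹' orderedSimplex n := by
    intro σ
    ext x
    rw [Set.mem_preimage, permMap_apply n σ x]
    rfl
  have hSmeas : ∀ σ : Equiv.Perm (Fin n), MeasurableSet (S σ) := by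
    intro σ
    rw [hpre σ]
    exact (measurableSet_orderedSimplex n).preimage (permMap n σ).measurable
  have hSbox : ∀ σ : Equiv.Perm (Fin n), S σ ⊆ box n := by
    intro σ x hx i _
    have := hx.2 (σ⁻¹ i)
    simpa using this
  have hint : ∀ σ : Equiv.Perm (Fin n),
      ∫ x in S σ, f x = ∫ y in orderedSimplex n, f (y ∘ ⇑σ⁻¹) := by
    intro σ
    have key := (measurePreserving_permMap n σ).setIntegral_preimage_emb
      (MeasurableEquiv.measurableEmbedding _) (fun y => f (y ∘ ⇑σ⁻¹)) (orderedSimplex n)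
    rw [hpre σ, ← key]
    refine setIntegral_congr_fun
      ((measurableSet_orderedSimplex n).preimage (permMap n σ).measurable) ?_
    intro x _
    show f x = f (permMap n σ x ∘ ⇑σ⁻¹)
    rw [permMap_apply n σ x]
    congr 1
    funext i
    simp
  have hdisj : (↑(Finset.univ : Finset (Equiv.Perm (Fin n))) : Set (Equiv.Perm (Fin n))).Pairwise
      (Function.onFun Disjoint S) := by
    intro σ _ τ _ hστ
    rw [Function.onFun, Set.disjoint_left]
    intro x hxσ hxτ
    have h1 : StrictMono (x ∘ σ) := hxσ.1
    have h2 : StrictMono (x ∘ τ) := hxτ.1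
    have hπ : StrictMono ⇑(Equiv.trans (τ : Fin n ≃ Fin n) (σ⁻¹ : Equiv.Perm (Fin n))) := by
      intro a b hab
      have hx2 : x (τ a) < x (τ b) := h2 hab
      have h1' : (x ∘ σ) ((σ⁻¹ : Equiv.Perm (Fin n)) (τ a))
          < (x ∘ σ) ((σ⁻¹ : Equiv.Perm (Fin n)) (τ b)) := by
        simpa using hx2
      exact h1.lt_iff_lt.mp h1'
    have hid : ⇑(Equiv.trans (τ : Fin n ≃ Fin n) (σ⁻¹ : Equiv.Perm (Fin n))) = id := by
      haveI : WellFoundedLT (Fin n) := inferInstance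
      have hrange : Set.range ⇑(Equiv.trans (τ : Fin n ≃ Fin n) (σ⁻¹ : Equiv.Perm (Fin n)))
          = Set.range (id : Fin n → Fin n) := by
        rw [Set.range_id]
        exact Equiv.range_eq_univ _
      exact (hπ.range_inj strictMono_id).1 hrange
    have hts : τ = σ := by
      refine Equiv.ext fun i => ?_
      have h' := congrFun hid i
      simp only [Equiv.trans_apply, id_eq] at h'
      have h'' := congrArg σ h'
      simpa using h''
    exact hστ hts.symm
  have hcover : box n =ᵐ[volume]
      ⋃ σ ∈ (Finset.univ : Finset (Equiv.Perm (Fin n))), S σ := by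
    rw [MeasureTheory.ae_eq_set]
    constructor
    · refine measure_mono_null (t := {y : Fin n → ℝ | ¬ Function.Injective y})
        (fun x hx => ?_) ?_
      · intro hinj
        refine hx.2 ?_
        have hmono : Monotone (x ∘ Tuple.sort x) := Tuple.monotone_sort x
        have hsm : StrictMono (x ∘ Tuple.sort x) :=
          hmono.strictMono_of_injective (hinj.comp (Equiv.injective _))
        refine Set.mem_biUnion (Finset.mem_univ (Tuple.sort x)) ?_
        exact ⟨hsm, fun i => hx.1 _ (Set.mem_univ _)⟩
      · have := ae_injective n
        rwa [MeasureTheory.ae_iff] at this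
    · have hsub : (⋃ σ ∈ (Finset.univ : Finset (Equiv.Perm (Fin n))), S σ) ⊆ box n := by
        intro x hx
        simp only [Set.mem_iUnion] at hx
        obtain ⟨σ, _, hxσ⟩ := hx
        exact hSbox σ hxσ
      rw [Set.diff_eq_empty.mpr hsub]
      exact measure_empty
  calc ∫ x, f x = ∫ x in box n, f x :=
        (setIntegral_eq_integral_of_forall_compl_eq_zero hsupp).symm
    _ = ∫ x in ⋃ σ ∈ (Finset.univ : Finset (Equiv.Perm (Fin n))), S σ, f x :=
        setIntegral_congr_set hcover
    _ = ∑ σ : Equiv.Perm (Fin n), ∫ x in S σ, f x :=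
        integral_biUnion_finset Finset.univ (fun σ _ => hSmeas σ) hdisj
          (fun σ _ => hf.integrableOn)
    _ = ∑ σ : Equiv.Perm (Fin n), ∫ y in orderedSimplex n, f (y ∘ ⇑σ⁻¹) :=
        Finset.sum_congr rfl fun σ _ => hint σ
    _ = ∑ σ : Equiv.Perm (Fin n), ∫ x in orderedSimplex n, f (x ∘ σ) :=
        Fintype.sum_equiv (Equiv.inv (Equiv.Perm (Fin n)))
          (fun σ => ∫ y in orderedSimplex n, f (y ∘ ⇑σ⁻¹))
          (fun σ => ∫ x in orderedSimplex n, f (x ∘ ⇑σ)) (fun σ => rfl)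

/-- Fubini splitting of an integral over `Fin (k+m) → ℝ` into first `k` and last `m` coords. -/
lemma integral_split (k m : ℕ) (F : (Fin k → ℝ) → ℝ) (G : (Fin m → ℝ) → ℝ)
    (hF : Integrable F) (hG : Integrable G) :
    Integrable (fun x : Fin (k + m) → ℝ => F (x ∘ Fin.castAdd m) * G (x ∘ Fin.natAdd k)) ∧
      ∫ x : Fin (k + m) → ℝ, F (x ∘ Fin.castAdd m) * G (x ∘ Fin.natAdd k)
        = (∫ y, F y) * ∫ z, G z := by
  classical
  set e1 : ((Fin k ⊕ Fin m) → ℝ) ≃ᵐ (Fin (k + m) → ℝ) :=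
    MeasurableEquiv.piCongrLeft (fun _ => ℝ) finSumFinEquiv with he1def
  set e2 : ((Fin k ⊕ Fin m) → ℝ) ≃ᵐ ((Fin k → ℝ) × (Fin m → ℝ)) :=
    MeasurableEquiv.sumPiEquivProdPi (fun _ : Fin k ⊕ Fin m => ℝ) with he2def
  have he1 : MeasurePreserving e1 volume volume :=
    MeasureTheory.volume_measurePreserving_piCongrLeft _ _
  have he2symm : MeasurePreserving e2.symm volume volume :=
    MeasureTheory.volume_measurePreserving_sumPiEquivProdPi_symm _
  have key : ∀ p : (Fin k → ℝ) × (Fin m → ℝ),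
      (e1 (e2.symm p)) ∘ Fin.castAdd m = p.1 ∧ (e1 (e2.symm p)) ∘ Fin.natAdd k = p.2 := by
    intro p
    constructor
    · funext l
      show (e1 (e2.symm p)) (Fin.castAdd m l) = p.1 l
      rw [← finSumFinEquiv_apply_left l, he1def, he2def]
      simp only [MeasurableEquiv.coe_piCongrLeft, MeasurableEquiv.coe_sumPiEquivProdPi_symm]
      exact Equiv.piCongrLeft_sumInl (fun _ => ℝ) finSumFinEquiv p.1 p.2 l
    · funext l
      show (e1 (e2.symm p)) (Fin.natAdd k l) = p.2 l
      rw [← finSumFinEquiv_apply_right l, he1def, he2def]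
      simp only [MeasurableEquiv.coe_piCongrLeft, MeasurableEquiv.coe_sumPiEquivProdPi_symm]
      exact Equiv.piCongrLeft_sumInr (fun _ => ℝ) finSumFinEquiv p.1 p.2 l
  have hprod : Integrable (fun p : (Fin k → ℝ) × (Fin m → ℝ) => F p.1 * G p.2) volume := by
    rw [Measure.volume_eq_prod]
    exact hF.mul_prod hG
  have hcompeq : (fun x : Fin (k + m) → ℝ => F (x ∘ Fin.castAdd m) * G (x ∘ Fin.natAdd k))
      = (fun p : (Fin k → ℝ) × (Fin m → ℝ) => F p.1 * G p.2) ∘ (e1.symm.trans e2) := by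
    funext x
    have hx : e1 (e2.symm ((e1.symm.trans e2) x)) = x := by
      simp
    have := key ((e1.symm.trans e2) x)
    rw [hx] at this
    simp only [Function.comp_apply]
    rw [this.1, this.2]
  have hT : MeasurePreserving (⇑(e1.symm.trans e2)) volume volume := by
    have h1 : MeasurePreserving e1.symm volume volume := he1.symm e1
    have h2 : MeasurePreserving e2 volume volume := by
      have := he2symm.symm e2.symm
      simpa using this
    exact h2.comp h1
  constructor
  · rw [hcompeq]
    exact (hT.integrable_comp_emb (e1.symm.trans e2).measurableEmbedding).2 hprod
  · rw [hcompeq]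
    have := hT.integral_comp' (fun p : (Fin k → ℝ) × (Fin m → ℝ) => F p.1 * G p.2)
    rw [show ((fun p : (Fin k → ℝ) × (Fin m → ℝ) => F p.1 * G p.2) ∘ (e1.symm.trans e2))
        = fun x => F ((e1.symm.trans e2) x).1 * G ((e1.symm.trans e2) x).2 from rfl]
    rw [this]
    rw [Measure.volume_eq_prod]
    exact MeasureTheory.integral_prod_mul F G

/-- Number of permutations extending a given injection of the first `k` coordinates. -/
lemma card_fiber (k m : ℕ) (φ : Fin k → Fin (k + m)) (hφ : Function.Injective φ) :
    #{σ : Equiv.Perm (Fin (k + m)) | (fun l : Fin k => σ (Fin.castAdd m l)) = φ}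
      = Nat.factorial m := by
  classical
  -- the complement subtypes
  have hlt : ∀ l : Fin k, ((Fin.castAdd m l : Fin (k + m)) : ℕ) < k := by
    intro l
    simpa using l.isLt
  let eB : {x : Fin (k + m) // ¬ (x : ℕ) < k} ≃ Fin m :=
    { toFun := fun x => ⟨(x : Fin (k + m)).val - k, by
        have h1 := (x : Fin (k + m)).isLt
        have h2 := x.prop
        omega⟩
      invFun := fun l => ⟨⟨k + l.val, by omega⟩, by simp⟩
      left_inv := fun x => by
        ext
        have h2 := x.prop
        simp only []
        omega
      right_inv := fun l => by
        ext
        simp only []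
        omega }
  have hcardB : Fintype.card {x : Fin (k + m) // ¬ (x : ℕ) < k} = m :=
    (Fintype.card_congr eB).trans (Fintype.card_fin m)
  have hcardA : Fintype.card {x : Fin (k + m) // x ∉ Set.range φ} = m := by
    have h1 : Fintype.card {x : Fin (k + m) // x ∈ Set.range φ} = k := by
      have e' : Fin k ≃ {x : Fin (k + m) // x ∈ Set.range φ} := Equiv.ofInjective φ hφ
      rw [← Fintype.card_congr e', Fintype.card_fin]
    have := Fintype.card_subtype_compl (fun x : Fin (k + m) => x ∈ Set.range φ)
    rw [this, h1, Fintype.card_fin]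
    omega
  let e0 : {x : Fin (k + m) // ¬ (x : ℕ) < k} ≃ {x : Fin (k + m) // x ∉ Set.range φ} :=
    Fintype.equivOfCardEq (hcardB.trans hcardA.symm)
  let u : Fin (k + m) → Fin (k + m) :=
    fun x => if h : (x : ℕ) < k then φ ⟨(x : ℕ), h⟩ else (e0 ⟨x, h⟩ : _)
  have huinj : Function.Injective u := by
    intro a b hab
    by_cases ha : (a : ℕ) < k <;> by_cases hb : (b : ℕ) < k
    · simp only [u, dif_pos ha, dif_pos hb] at hab
      have h' := hφ hab
      have h'' : ((⟨(a : ℕ), ha⟩ : Fin k) : ℕ) = ((⟨(b : ℕ), hb⟩ : Fin k) : ℕ) :=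
        congrArg Fin.val h'
      exact Fin.ext h''
    · simp only [u, dif_pos ha, dif_neg hb] at hab
      exact absurd ⟨_, hab⟩ (e0 ⟨b, hb⟩).prop
    · simp only [u, dif_neg ha, dif_pos hb] at hab
      exact absurd ⟨_, hab.symm⟩ (e0 ⟨a, ha⟩).prop
    · simp only [u, dif_neg ha, dif_neg hb] at hab
      have := e0.injective (Subtype.ext hab)
      exact congrArg Subtype.val this
  let σ0 : Equiv.Perm (Fin (k + m)) :=
    Equiv.ofBijective u (Finite.injective_iff_bijective.1 huinj)
  have hσ0 : ∀ l : Fin k, σ0 (Fin.castAdd m l) = φ l := by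
    intro l
    show u (Fin.castAdd m l) = φ l
    rw [show u (Fin.castAdd m l) = φ ⟨((Fin.castAdd m l : Fin (k + m)) : ℕ), hlt l⟩ from
      dif_pos (hlt l)]
    have heq : (⟨((Fin.castAdd m l : Fin (k + m)) : ℕ), hlt l⟩ : Fin k) = l :=
      Fin.ext (by simp)
    rw [heq]
  -- chain of equivalences
  let P : Equiv.Perm (Fin (k + m)) → Prop := fun σ => (fun l : Fin k => σ (Fin.castAdd m l)) = φ
  have key : Fintype.card {σ : Equiv.Perm (Fin (k + m)) // P σ} = Nat.factorial m := by
    let E1 : {σ : Equiv.Perm (Fin (k + m)) // P σ} ≃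
        {ρ : Equiv.Perm (Fin (k + m)) //
          (fun l : Fin k => ρ (Fin.castAdd m l)) = fun l : Fin k => Fin.castAdd m l} := by
      refine Equiv.subtypeEquiv (Equiv.mulLeft (σ0⁻¹ : Equiv.Perm (Fin (k + m)))) fun σ => ?_
      constructor
      · intro hσ
        funext l
        show (σ0⁻¹ * σ) (Fin.castAdd m l) = Fin.castAdd m l
        rw [Equiv.Perm.mul_apply, congrFun hσ l, ← hσ0 l, Equiv.Perm.inv_def, Equiv.symm_apply_apply]
      · intro hσ
        funext l
        have h1 : (σ0⁻¹ * σ) (Fin.castAdd m l) = Fin.castAdd m l := congrFun hσ l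
        rw [Equiv.Perm.mul_apply] at h1
        have h2 := congrArg σ0 h1
        rw [Equiv.Perm.inv_def, Equiv.apply_symm_apply] at h2
        rw [h2, hσ0 l]
    let E2 : {ρ : Equiv.Perm (Fin (k + m)) //
          (fun l : Fin k => ρ (Fin.castAdd m l)) = fun l : Fin k => Fin.castAdd m l} ≃
        {f : Equiv.Perm (Fin (k + m)) // ∀ a : Fin (k + m), ¬ ¬ ((a : ℕ) < k) → f a = a} := by
      refine Equiv.subtypeEquivRight fun ρ => ?_
      constructor
      · intro hρ a ha
        rw [not_not] at ha
        have := congrFun hρ ⟨(a : ℕ), ha⟩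
        simpa [Fin.ext_iff] using this
      · intro hρ
        funext l
        exact hρ _ (not_not.2 (hlt l))
    let E3 := (Equiv.Perm.subtypeEquivSubtypePerm (fun a : Fin (k + m) => ¬ (a : ℕ) < k)).symm
    have := Fintype.card_congr ((E1.trans E2).trans E3)
    rw [this, Fintype.card_perm, hcardB]
  rw [← key]
  exact (Fintype.card_subtype _).symm

/-- Number of strictly monotone maps with prescribed first and last values. -/
lemma card_strictMono (k N : ℕ) (hk : 2 ≤ k) (hkN : k ≤ N) (i j : Fin N) (hij : i < j) :
    #{φ : Fin k → Fin N | StrictMono φ ∧ φ ⟨0, by omega⟩ = i ∧ φ ⟨k - 1, by omega⟩ = j}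
      = ((j : ℕ) - (i : ℕ) - 1).choose (k - 2) := by
  classical
  have h0k : 0 < k := by omega
  have hAfacts : ∀ B : Finset (Fin N), B ∈ Finset.powersetCard (k - 2) (Finset.Ioo i j) →
      (insert i (insert j B)).card = k ∧ (∀ x ∈ insert i (insert j B), i ≤ x ∧ x ≤ j) := by
    intro B hB
    rw [Finset.mem_powersetCard] at hB
    obtain ⟨hBsub, hBcard⟩ := hB
    have hjB : j ∉ B := fun h => absurd (Finset.mem_Ioo.1 (hBsub h)).2 (lt_irrefl j)
    have hiB : i ∉ insert j B := by
      simp only [Finset.mem_insert]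
      rintro (h | h)
      · exact absurd h (ne_of_lt hij)
      · exact absurd (Finset.mem_Ioo.1 (hBsub h)).1 (lt_irrefl i)
    constructor
    · rw [Finset.card_insert_of_notMem hiB, Finset.card_insert_of_notMem hjB, hBcard]
      omega
    · intro x hx
      simp only [Finset.mem_insert] at hx
      rcases hx with h | h | h
      · exact ⟨le_of_eq h.symm, h ▸ le_of_lt hij⟩
      · exact ⟨h ▸ le_of_lt hij, le_of_eq h⟩
      · have := Finset.mem_Ioo.1 (hBsub h)
        exact ⟨le_of_lt this.1, le_of_lt this.2⟩
  have hAmin : ∀ B (hB : B ∈ Finset.powersetCard (k - 2) (Finset.Ioo i j)),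
      (insert i (insert j B)).min' ⟨i, Finset.mem_insert_self _ _⟩ = i := by
    intro B hB
    exact le_antisymm (Finset.min'_le _ _ (Finset.mem_insert_self _ _))
      (Finset.le_min' _ _ _ fun x hx => ((hAfacts B hB).2 x hx).1)
  have hAmax : ∀ B (hB : B ∈ Finset.powersetCard (k - 2) (Finset.Ioo i j)),
      (insert i (insert j B)).max' ⟨i, Finset.mem_insert_self _ _⟩ = j := by
    intro B hB
    refine le_antisymm (Finset.max'_le _ _ _ fun x hx => ((hAfacts B hB).2 x hx).2)
      (Finset.le_max' _ _ ?_)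
    exact Finset.mem_insert_of_mem (Finset.mem_insert_self _ _)
  have hmidinj : ∀ ψ : Fin k → Fin N, StrictMono ψ →
      Function.Injective (fun l : Fin (k - 2) =>
        ψ ⟨(l : ℕ) + 1, by have := l.isLt; omega⟩) := by
    intro ψ hψ a b hab
    have h1 := hψ.injective hab
    have h2 := congrArg Fin.val h1
    simp only [] at h2
    exact Fin.ext (by omega)
  have hmidcard : ∀ ψ : Fin k → Fin N, StrictMono ψ →
      (Finset.image (fun l : Fin (k - 2) =>
        ψ ⟨(l : ℕ) + 1, by have := l.isLt; omega⟩) Finset.univ).card = k - 2 := by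
    intro ψ hψ
    rw [Finset.card_image_of_injective _ (hmidinj ψ hψ), Finset.card_univ, Fintype.card_fin]
  rw [show (((j : ℕ) - (i : ℕ) - 1).choose (k - 2))
      = (Finset.powersetCard (k - 2) (Finset.Ioo i j)).card from by
    rw [Finset.card_powersetCard, Fin.card_Ioo]]
  refine Finset.card_bij'
    (fun φ _ => Finset.image (fun l : Fin (k - 2) =>
      φ ⟨(l : ℕ) + 1, by have := l.isLt; omega⟩) Finset.univ)
    (fun B hB => ⇑((insert i (insert j B)).orderEmbOfFin (hAfacts B hB).1)) ?_ ?_ ?_ ?_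
  · intro φ hφ
    simp only [Finset.mem_filter, Finset.mem_univ, true_and] at hφ
    obtain ⟨hSM, h0, hlast⟩ := hφ
    rw [Finset.mem_powersetCard]
    refine ⟨fun x hx => ?_, hmidcard φ hSM⟩
    simp only [Finset.mem_image, Finset.mem_univ, true_and] at hx
    obtain ⟨l, rfl⟩ := hx
    rw [Finset.mem_Ioo]
    constructor
    · rw [← h0]
      exact hSM (Fin.mk_lt_mk.2 (by omega))
    · rw [← hlast]
      exact hSM (Fin.mk_lt_mk.2 (by have := l.isLt; omega))
  · intro B hB
    simp only [Finset.mem_filter, Finset.mem_univ, true_and]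
    refine ⟨(Finset.orderEmbOfFin _ _).strictMono, ?_, ?_⟩
    · rw [Finset.orderEmbOfFin_zero (hAfacts B hB).1 h0k]
      exact hAmin B hB
    · rw [Finset.orderEmbOfFin_last (hAfacts B hB).1 h0k]
      exact hAmax B hB
  · intro φ hφ
    simp only [Finset.mem_filter, Finset.mem_univ, true_and] at hφ
    obtain ⟨hSM, h0, hlast⟩ := hφ
    refine (Finset.orderEmbOfFin_unique _ ?_ hSM).symm
    intro x
    by_cases hx0 : (x : ℕ) = 0
    · have hx : x = ⟨0, h0k⟩ := Fin.ext hx0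
      rw [hx, h0]
      exact Finset.mem_insert_self _ _
    by_cases hxl : (x : ℕ) = k - 1
    · have hx : x = ⟨k - 1, by omega⟩ := Fin.ext hxl
      rw [hx, hlast]
      exact Finset.mem_insert_of_mem (Finset.mem_insert_self _ _)
    · refine Finset.mem_insert_of_mem (Finset.mem_insert_of_mem ?_)
      rw [Finset.mem_image]
      refine ⟨⟨(x : ℕ) - 1, by have := x.isLt; omega⟩, Finset.mem_univ _, ?_⟩
      exact congrArg φ (Fin.ext (show (x : ℕ) - 1 + 1 = (x : ℕ) by omega))
  · intro B hB
    have hBsub : B ⊆ Finset.Ioo i j := (Finset.mem_powersetCard.1 hB).1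
    have hBcard : B.card = k - 2 := (Finset.mem_powersetCard.1 hB).2
    have hzero : (insert i (insert j B)).orderEmbOfFin (hAfacts B hB).1 ⟨0, h0k⟩ = i := by
      rw [Finset.orderEmbOfFin_zero (hAfacts B hB).1 h0k]
      exact hAmin B hB
    have hlastv : (insert i (insert j B)).orderEmbOfFin (hAfacts B hB).1
        ⟨k - 1, by omega⟩ = j := by
      rw [Finset.orderEmbOfFin_last (hAfacts B hB).1 h0k]
      exact hAmax B hB
    refine Finset.eq_of_subset_of_card_le ?_ ?_
    · intro x hx
      simp only [Finset.mem_image, Finset.mem_univ, true_and] at hx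
      obtain ⟨l, rfl⟩ := hx
      have hmem : (insert i (insert j B)).orderEmbOfFin (hAfacts B hB).1
          ⟨(l : ℕ) + 1, by have := l.isLt; omega⟩ ∈ insert i (insert j B) :=
        Finset.orderEmbOfFin_mem _ _ _
      have hlt1 : i < (insert i (insert j B)).orderEmbOfFin (hAfacts B hB).1
          ⟨(l : ℕ) + 1, by have := l.isLt; omega⟩ := by
        have h' := ((insert i (insert j B)).orderEmbOfFin (hAfacts B hB).1).strictMono
          (show (⟨0, h0k⟩ : Fin k) < ⟨(l : ℕ) + 1, by have := l.isLt; omega⟩ from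
            Fin.mk_lt_mk.2 (by omega))
        rwa [hzero] at h'
      have hlt2 : (insert i (insert j B)).orderEmbOfFin (hAfacts B hB).1
          ⟨(l : ℕ) + 1, by have := l.isLt; omega⟩ < j := by
        have h' := ((insert i (insert j B)).orderEmbOfFin (hAfacts B hB).1).strictMono
          (show (⟨(l : ℕ) + 1, by have := l.isLt; omega⟩ : Fin k) < ⟨k - 1, by omega⟩ from
            Fin.mk_lt_mk.2 (by have := l.isLt; omega))
        rwa [hlastv] at h'
      rcases Finset.mem_insert.1 hmem with h | h
      · exact absurd h (ne_of_gt hlt1)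
      rcases Finset.mem_insert.1 h with h' | h'
      · exact absurd h' (ne_of_lt hlt2)
      · exact h'
    · rw [hBcard, hmidcard _ ((insert i (insert j B)).orderEmbOfFin (hAfacts B hB).1).strictMono]

/-- The combinatorial core. -/
lemma sum_perm_eq (k m : ℕ) (hk : 2 ≤ k) (h : Fin (k + m) → Fin (k + m) → ℝ) :
    ∑ σ : Equiv.Perm (Fin (k + m)),
        (if StrictMono (fun l : Fin k => σ (Fin.castAdd m l)) then
          h (σ (Fin.castAdd m ⟨0, by omega⟩)) (σ (Fin.castAdd m ⟨k - 1, by omega⟩)) else 0)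
      = (Nat.factorial m : ℝ) *
          ∑ i : Fin (k + m), ∑ j : Fin (k + m),
            if (i : ℕ) < (j : ℕ) ∧ k - 1 ≤ (j : ℕ) - (i : ℕ) then
              (((j : ℕ) - (i : ℕ) - 1).choose (k - 2) : ℝ) * h i j
            else 0 := by
  classical
  have hkN : k ≤ k + m := Nat.le_add_right k m
  set F : (Fin k → Fin (k + m)) → ℝ := fun φ =>
    if StrictMono φ then h (φ ⟨0, by omega⟩) (φ ⟨k - 1, by omega⟩) else 0 with hFdef
  set g : Equiv.Perm (Fin (k + m)) → (Fin k → Fin (k + m)) :=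
    fun σ => fun l : Fin k => σ (Fin.castAdd m l) with hgdef
  have step0 : ∑ σ : Equiv.Perm (Fin (k + m)),
      (if StrictMono (fun l : Fin k => σ (Fin.castAdd m l)) then
        h (σ (Fin.castAdd m ⟨0, by omega⟩)) (σ (Fin.castAdd m ⟨k - 1, by omega⟩)) else 0)
      = ∑ σ : Equiv.Perm (Fin (k + m)), F (g σ) := by
    refine Finset.sum_congr rfl fun σ _ => ?_
    rw [hFdef, hgdef]
  rw [step0]
  rw [Finset.sum_comp F g]
  rw [Finset.sum_subset (Finset.subset_univ (Finset.image g Finset.univ)) (by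
    intro φ _ hφ
    have : #{σ : Equiv.Perm (Fin (k + m)) | g σ = φ} = 0 := by
      rw [Finset.card_eq_zero]
      ext σ
      simp only [Finset.mem_filter, Finset.mem_univ, true_and, Finset.notMem_empty,
        iff_false]
      intro hgσ
      exact hφ (Finset.mem_image.2 ⟨σ, Finset.mem_univ σ, hgσ⟩)
    rw [this, zero_smul])]
  have step2 : ∑ φ : Fin k → Fin (k + m),
      #{σ : Equiv.Perm (Fin (k + m)) | g σ = φ} • F φ
      = ∑ φ : Fin k → Fin (k + m), (Nat.factorial m : ℝ) * F φ := by
    refine Finset.sum_congr rfl fun φ _ => ?_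
    by_cases hSM : StrictMono φ
    · have hinj : Function.Injective φ := hSM.injective
      have hcard : #{σ : Equiv.Perm (Fin (k + m)) | g σ = φ} = Nat.factorial m := by
        simp only [hgdef]
        exact card_fiber k m φ hinj
      rw [hcard, nsmul_eq_mul]
    · have hF0 : F φ = 0 := by rw [hFdef]; exact if_neg hSM
      rw [hF0, smul_zero, mul_zero]
  rw [step2, ← Finset.mul_sum]
  congr 1
  -- now: ∑ φ, F φ = double sum
  have hFexp : ∀ φ : Fin k → Fin (k + m), F φ
      = ∑ i : Fin (k + m), ∑ j : Fin (k + m),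
          if StrictMono φ ∧ φ ⟨0, by omega⟩ = i ∧ φ ⟨k - 1, by omega⟩ = j then h i j
          else 0 := by
    intro φ
    simp only [hFdef]
    by_cases hSM : StrictMono φ
    · have inner : ∀ i : Fin (k + m), (∑ j : Fin (k + m),
          if StrictMono φ ∧ φ ⟨0, by omega⟩ = i ∧ φ ⟨k - 1, by omega⟩ = j then h i j
          else 0) = if φ ⟨0, by omega⟩ = i then h i (φ ⟨k - 1, by omega⟩) else 0 := by
        intro i
        by_cases h0 : φ ⟨0, by omega⟩ = i
        · simp only [hSM, h0, true_and, if_pos]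
          rw [Finset.sum_ite_eq Finset.univ (φ ⟨k - 1, by omega⟩) (fun j => h i j)]
          exact if_pos (Finset.mem_univ _)
        · simp only [h0, false_and, and_false, if_neg, if_false, not_false_iff]
          simp
      rw [Finset.sum_congr rfl fun i _ => inner i]
      rw [Finset.sum_ite_eq Finset.univ (φ ⟨0, by omega⟩)
        (fun i => h i (φ ⟨k - 1, by omega⟩))]
      rw [if_pos (Finset.mem_univ _)]
      exact if_pos hSM
    · rw [if_neg hSM]
      symm
      refine Finset.sum_eq_zero fun i _ => Finset.sum_eq_zero fun j _ => ?_
      simp [hSM]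
  rw [Finset.sum_congr rfl fun φ _ => hFexp φ]
  rw [Finset.sum_comm]
  refine Finset.sum_congr rfl fun i _ => ?_
  rw [Finset.sum_comm]
  refine Finset.sum_congr rfl fun j _ => ?_
  -- ∑ φ, ite (...) (h i j) 0 = target
  rw [← Finset.sum_filter]
  rw [Finset.sum_const]
  by_cases hij : i < j
  · have hcard := card_strictMono k (k + m) hk hkN i j hij
    rw [hcard]
    have hijv : (i : ℕ) < (j : ℕ) := hij
    by_cases hcond : k - 1 ≤ (j : ℕ) - (i : ℕ)
    · rw [if_pos ⟨hijv, hcond⟩, nsmul_eq_mul]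
    · rw [if_neg (by exact fun hc => hcond hc.2)]
      have hnotle : (j : ℕ) - (i : ℕ) < k - 1 := Nat.lt_of_not_le hcond
      have h1 : (1 : ℕ) ≤ (j : ℕ) - (i : ℕ) := Nat.sub_pos_of_lt hijv
      have h2 : (j : ℕ) - (i : ℕ) - 1 < k - 1 - 1 := Nat.sub_lt_sub_right h1 hnotle
      have h3 : (j : ℕ) - (i : ℕ) - 1 < k - 2 := by
        rwa [Nat.sub_sub] at h2
      have hzero : ((j : ℕ) - (i : ℕ) - 1).choose (k - 2) = 0 :=
        Nat.choose_eq_zero_of_lt h3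
      rw [hzero, zero_smul]
  · have hk1 : (0 : ℕ) < k - 1 := Nat.sub_pos_of_lt (Nat.lt_of_lt_of_le Nat.one_lt_two hk)
    have hempty : Finset.filter (fun φ : Fin k → Fin (k + m) =>
        StrictMono φ ∧ φ ⟨0, by omega⟩ = i ∧ φ ⟨k - 1, by omega⟩ = j) Finset.univ = ∅ := by
      refine Finset.eq_empty_of_forall_notMem fun φ hφ => ?_
      rw [Finset.mem_filter] at hφ
      obtain ⟨-, hSM, h0, hlast⟩ := hφ
      apply hij
      rw [← h0, ← hlast]
      exact hSM (Fin.mk_lt_mk.2 hk1)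
    rw [hempty]
    have : ¬ ((i : ℕ) < (j : ℕ) ∧ k - 1 ≤ (j : ℕ) - (i : ℕ)) := by
      intro hc
      exact hij (by exact hc.1)
    rw [if_neg this]
    simp

end IntermAux

open IntermAux in
theorem intermittency_derivative_integer_moments
    (ω : ℝ → ℝ) (g : ℝ → ℝ → ℝ)
    (hω : ContinuousOn ω (Set.Icc 0 1))
    (hg : ContinuousOn (fun p : ℝ × ℝ => g p.1 p.2) (Set.Icc 0 1 ×ˢ Set.Icc 0 1))
    (n k : ℕ) (hk : 2 ≤ k) (hkn : k ≤ n) :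
    (1 / (Nat.factorial (n - k) : ℝ)) *
        (∫ s in Set.Ioo (0 : ℝ) 1, Real.exp (ω s)) ^ (n - k) *
        (∫ s in orderedSimplex k,
          Real.exp (∑ i, ω (s i)) * g (s ⟨0, by omega⟩) (s ⟨k - 1, by omega⟩)) =
      ∫ s in orderedSimplex n,
        Real.exp (∑ i, ω (s i)) *
          ∑ i : Fin n, ∑ j : Fin n,
            if (i : ℕ) < (j : ℕ) ∧ k - 1 ≤ (j : ℕ) - (i : ℕ) then
              (((j : ℕ) - (i : ℕ) - 1).choose (k - 2) : ℝ) * g (s i) (s j)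
            else 0 := by
  classical
  obtain ⟨m, rfl⟩ : ∃ m, n = k + m := ⟨n - k, by omega⟩
  rw [Nat.add_sub_cancel_left]
  -- continuity of the generic integrand
  have hgencont : ∀ (N : ℕ) (a b : Fin N),
      ContinuousOn (fun x : Fin N → ℝ => Real.exp (∑ i, ω (x i)) * g (x a) (x b))
        (Set.pi Set.univ fun _ : Fin N => Set.Icc (0 : ℝ) 1) := by
    intro N a b
    have hsum : ContinuousOn (fun x : Fin N → ℝ => ∑ i, ω (x i))
        (Set.pi Set.univ fun _ : Fin N => Set.Icc (0 : ℝ) 1) := by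
      refine continuousOn_finset_sum _ fun i _ => ?_
      exact hω.comp (continuous_apply i).continuousOn fun x hx => hx i (Set.mem_univ i)
    have hexpc := Real.continuous_exp.comp_continuousOn hsum
    have hpair : ContinuousOn (fun x : Fin N → ℝ => ((x a, x b) : ℝ × ℝ))
        (Set.pi Set.univ fun _ : Fin N => Set.Icc (0 : ℝ) 1) :=
      ((continuous_apply a).prodMk (continuous_apply b)).continuousOn
    have hgc : ContinuousOn (fun x : Fin N → ℝ => g (x a) (x b))
        (Set.pi Set.univ fun _ : Fin N => Set.Icc (0 : ℝ) 1) :=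
      hg.comp hpair fun x hx =>
        Set.mk_mem_prod (hx a (Set.mem_univ a)) (hx b (Set.mem_univ b))
    exact hexpc.mul hgc
  have hgenint : ∀ (N : ℕ) (a b : Fin N),
      IntegrableOn (fun x : Fin N → ℝ => Real.exp (∑ i, ω (x i)) * g (x a) (x b))
        (orderedSimplex N) := by
    intro N a b
    refine ((hgencont N a b).integrableOn_compact
      (isCompact_univ_pi fun _ => isCompact_Icc)).mono_set ?_
    exact fun x hx => box_subset_Icc N (orderedSimplex_subset_box N hx)
  -- the two factors
  set fk : (Fin k → ℝ) → ℝ := fun y =>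
    Real.exp (∑ i, ω (y i)) * g (y ⟨0, by omega⟩) (y ⟨k - 1, by omega⟩) with hfk
  set Fk : (Fin k → ℝ) → ℝ := Set.indicator (orderedSimplex k) fk with hFk
  set f0 : ℝ → ℝ := Set.indicator (Set.Ioo (0 : ℝ) 1) (fun t => Real.exp (ω t)) with hf0
  set Gm : (Fin m → ℝ) → ℝ := fun z => ∏ l, f0 (z l) with hGm
  have hFkint : Integrable Fk := by
    rw [hFk]
    exact (hgenint k ⟨0, by omega⟩ ⟨k - 1, by omega⟩).integrable_indicator
      (measurableSet_orderedSimplex k)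
  have hexpc1 : ContinuousOn (fun t : ℝ => Real.exp (ω t)) (Set.Icc 0 1) :=
    Real.continuous_exp.comp_continuousOn hω
  have hf0int : Integrable f0 := by
    rw [hf0]
    exact ((hexpc1.integrableOn_compact isCompact_Icc).mono_set
      Set.Ioo_subset_Icc_self).integrable_indicator measurableSet_Ioo
  have hGmint : Integrable Gm :=
    MeasureTheory.Integrable.fintype_prod (f := fun _ : Fin m => f0) fun _ => hf0int
  obtain ⟨hHint, hHeq⟩ := integral_split k m Fk Gm hFkint hGmint
  -- support of H
  have hsupp : ∀ x : Fin (k + m) → ℝ, x ∉ box (k + m) →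
      Fk (x ∘ Fin.castAdd m) * Gm (x ∘ Fin.natAdd k) = 0 := by
    intro x hx
    have : ∃ i : Fin (k + m), x i ∉ Set.Ioo (0 : ℝ) 1 := by
      by_contra hcon
      push_neg at hcon
      exact hx fun i _ => hcon i
    obtain ⟨i, hi⟩ := this
    by_cases hik : (i : ℕ) < k
    · have hnotmem : (x ∘ Fin.castAdd m) ∉ orderedSimplex k := by
        intro hmem
        have h2 : x (Fin.castAdd m ⟨(i : ℕ), hik⟩) ∈ Set.Ioo (0 : ℝ) 1 :=
          hmem.2 ⟨(i : ℕ), hik⟩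
        have heq : Fin.castAdd m (⟨(i : ℕ), hik⟩ : Fin k) = i := Fin.ext rfl
        rw [heq] at h2
        exact hi h2
      rw [hFk, Set.indicator_of_notMem hnotmem, zero_mul]
    · have hlt : (i : ℕ) - k < m := by
        have := i.isLt
        omega
      have heq : Fin.natAdd k (⟨(i : ℕ) - k, hlt⟩ : Fin m) = i := Fin.ext (by
        show k + ((i : ℕ) - k) = (i : ℕ)
        omega)
      have hzero : f0 ((x ∘ Fin.natAdd k) ⟨(i : ℕ) - k, hlt⟩) = 0 := by
        show f0 (x (Fin.natAdd k ⟨(i : ℕ) - k, hlt⟩)) = 0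
        rw [heq, hf0]
        exact Set.indicator_of_notMem hi _
      have : Gm (x ∘ Fin.natAdd k) = 0 := by
        rw [hGm]
        exact Finset.prod_eq_zero (Finset.mem_univ _) hzero
      rw [this, mul_zero]
  have hstar := integral_eq_sum_perm (k + m)
    (fun x => Fk (x ∘ Fin.castAdd m) * Gm (x ∘ Fin.natAdd k)) hHint hsupp
  -- pointwise evaluation on the simplex
  have hpoint : ∀ σ : Equiv.Perm (Fin (k + m)), ∀ x ∈ orderedSimplex (k + m),
      Fk ((x ∘ ⇑σ) ∘ Fin.castAdd m) * Gm ((x ∘ ⇑σ) ∘ Fin.natAdd k)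
        = if StrictMono (fun l : Fin k => σ (Fin.castAdd m l)) then
            Real.exp (∑ i, ω (x i)) *
              g (x (σ (Fin.castAdd m ⟨0, by omega⟩))) (x (σ (Fin.castAdd m ⟨k - 1, by omega⟩)))
          else 0 := by
    intro σ x hx
    obtain ⟨hxSM, hxIoo⟩ := hx
    have hzprod : Gm ((x ∘ ⇑σ) ∘ Fin.natAdd k)
        = Real.exp (∑ l : Fin m, ω (x (σ (Fin.natAdd k l)))) := by
      rw [hGm, Real.exp_sum]
      refine Finset.prod_congr rfl fun l _ => ?_
      show f0 (x (σ (Fin.natAdd k l))) = Real.exp (ω (x (σ (Fin.natAdd k l))))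
      rw [hf0]
      exact Set.indicator_of_mem (hxIoo _) _
    by_cases hSM : StrictMono (fun l : Fin k => σ (Fin.castAdd m l))
    · have hymem : ((x ∘ ⇑σ) ∘ Fin.castAdd m) ∈ orderedSimplex k := by
        refine ⟨fun a b hab => hxSM (hSM hab), fun l => hxIoo _⟩
      have hFkval : Fk ((x ∘ ⇑σ) ∘ Fin.castAdd m)
          = Real.exp (∑ l : Fin k, ω (x (σ (Fin.castAdd m l)))) *
              g (x (σ (Fin.castAdd m ⟨0, by omega⟩)))
                (x (σ (Fin.castAdd m ⟨k - 1, by omega⟩))) := by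
        rw [hFk, Set.indicator_of_mem hymem, hfk]
        rfl
      rw [hFkval, hzprod, if_pos hSM]
      have hsum2 : ∑ p : Fin k ⊕ Fin m, ω (x (σ (finSumFinEquiv p)))
          = (∑ l : Fin k, ω (x (σ (Fin.castAdd m l))))
            + ∑ l : Fin m, ω (x (σ (Fin.natAdd k l))) := by
        rw [Fintype.sum_sum_type]
        congr 1
      have hsum3 : ∑ p : Fin k ⊕ Fin m, ω (x (σ (finSumFinEquiv p)))
          = ∑ i : Fin (k + m), ω (x i) :=
        Fintype.sum_equiv (finSumFinEquiv.trans σ) _ _ fun p => rfl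
      have hsplit : (∑ l : Fin k, ω (x (σ (Fin.castAdd m l))))
          + (∑ l : Fin m, ω (x (σ (Fin.natAdd k l)))) = ∑ i : Fin (k + m), ω (x i) := by
        rw [← hsum2, hsum3]
      rw [← hsplit, Real.exp_add]
      ring
    · rw [if_neg hSM]
      have hnot : ((x ∘ ⇑σ) ∘ Fin.castAdd m) ∉ orderedSimplex k := by
        intro hy
        refine hSM fun a b hab => ?_
        exact hxSM.lt_iff_lt.1 (hy.1 hab)
      rw [hFk, Set.indicator_of_notMem hnot, zero_mul]
  have hterm : ∀ σ : Equiv.Perm (Fin (k + m)),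
      (∫ x in orderedSimplex (k + m),
        Fk ((x ∘ ⇑σ) ∘ Fin.castAdd m) * Gm ((x ∘ ⇑σ) ∘ Fin.natAdd k))
      = ∫ x in orderedSimplex (k + m),
          (if StrictMono (fun l : Fin k => σ (Fin.castAdd m l)) then
            Real.exp (∑ i, ω (x i)) *
              g (x (σ (Fin.castAdd m ⟨0, by omega⟩))) (x (σ (Fin.castAdd m ⟨k - 1, by omega⟩)))
          else 0) :=
    fun σ => setIntegral_congr_fun (measurableSet_orderedSimplex _)
      (fun x hx => hpoint σ x hx)
  have hintterm : ∀ σ : Equiv.Perm (Fin (k + m)),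
      IntegrableOn (fun x : Fin (k + m) → ℝ =>
        (if StrictMono (fun l : Fin k => σ (Fin.castAdd m l)) then
          Real.exp (∑ i, ω (x i)) *
            g (x (σ (Fin.castAdd m ⟨0, by omega⟩))) (x (σ (Fin.castAdd m ⟨k - 1, by omega⟩)))
        else 0)) (orderedSimplex (k + m)) := by
    intro σ
    by_cases hSM : StrictMono (fun l : Fin k => σ (Fin.castAdd m l))
    · simp only [if_pos hSM]
      exact hgenint (k + m) _ _
    · simp only [if_neg hSM]
      exact integrableOn_zero
  have hptAll : ∀ x : Fin (k + m) → ℝ,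
      (∑ σ : Equiv.Perm (Fin (k + m)),
        (if StrictMono (fun l : Fin k => σ (Fin.castAdd m l)) then
          Real.exp (∑ i, ω (x i)) *
            g (x (σ (Fin.castAdd m ⟨0, by omega⟩))) (x (σ (Fin.castAdd m ⟨k - 1, by omega⟩)))
        else 0))
      = (Nat.factorial m : ℝ) * (Real.exp (∑ i, ω (x i)) *
          ∑ i : Fin (k + m), ∑ j : Fin (k + m),
            if (i : ℕ) < (j : ℕ) ∧ k - 1 ≤ (j : ℕ) - (i : ℕ) then
              (((j : ℕ) - (i : ℕ) - 1).choose (k - 2) : ℝ) * g (x i) (x j)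
            else 0) := by
    intro x
    have h1 : ∀ σ : Equiv.Perm (Fin (k + m)),
        (if StrictMono (fun l : Fin k => σ (Fin.castAdd m l)) then
          Real.exp (∑ i, ω (x i)) *
            g (x (σ (Fin.castAdd m ⟨0, by omega⟩))) (x (σ (Fin.castAdd m ⟨k - 1, by omega⟩)))
        else 0)
        = Real.exp (∑ i, ω (x i)) *
            (if StrictMono (fun l : Fin k => σ (Fin.castAdd m l)) then
              g (x (σ (Fin.castAdd m ⟨0, by omega⟩))) (x (σ (Fin.castAdd m ⟨k - 1, by omega⟩)))
            else 0) := by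
      intro σ
      rw [mul_ite, mul_zero]
    rw [Finset.sum_congr rfl fun σ _ => h1 σ, ← Finset.mul_sum]
    rw [sum_perm_eq k m hk (fun i j => g (x i) (x j))]
    ring
  have hHval : (∫ y, Fk y) * (∫ z, Gm z)
      = (Nat.factorial m : ℝ) * ∫ x in orderedSimplex (k + m),
          Real.exp (∑ i, ω (x i)) *
            ∑ i : Fin (k + m), ∑ j : Fin (k + m),
              if (i : ℕ) < (j : ℕ) ∧ k - 1 ≤ (j : ℕ) - (i : ℕ) then
                (((j : ℕ) - (i : ℕ) - 1).choose (k - 2) : ℝ) * g (x i) (x j)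
              else 0 := by
    rw [← hHeq, hstar]
    rw [Finset.sum_congr rfl fun σ _ => hterm σ]
    rw [← MeasureTheory.integral_finset_sum _ fun σ _ => hintterm σ]
    rw [setIntegral_congr_fun (measurableSet_orderedSimplex _) fun x _ => hptAll x]
    rw [MeasureTheory.integral_const_mul]
  have hFkval2 : ∫ y, Fk y = ∫ s in orderedSimplex k,
      Real.exp (∑ i, ω (s i)) * g (s ⟨0, by omega⟩) (s ⟨k - 1, by omega⟩) := by
    rw [hFk]
    exact MeasureTheory.integral_indicator (measurableSet_orderedSimplex k)
  have hGmval : ∫ z, Gm z = (∫ s in Set.Ioo (0 : ℝ) 1, Real.exp (ω s)) ^ m := by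
    rw [hGm, MeasureTheory.integral_fintype_prod_volume_eq_pow (ι := Fin m) f0, Fintype.card_fin]
    congr 1
    rw [hf0]
    exact MeasureTheory.integral_indicator measurableSet_Ioo
  rw [hFkval2, hGmval] at hHval
  have hfac : (Nat.factorial m : ℝ) ≠ 0 :=
    Nat.cast_ne_zero.2 (Nat.factorial_ne_zero m)
  refine mul_left_cancel₀ hfac ?_
  rw [← hHval]
  field_simp
  rw [hfk]
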